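/- Let G = GL(n, ℂ), let θ and φ be two angles such that the matrix A has no eigenvalues on the rays L_θ and L_φ, and let log_θ A, log_φ A denote the logarithms defined via holomorphic functional calculus with branch cuts along L_θ and L_φ respectively (0 ≤ θ < φ < 2π). Then log_θ A - log_φ A = -2πi P, where P is the spectral projection of A onto the eigenvalues with argument in the sector (θ, φ); in particular P² = P. -/

import Mathlib

open Complex Polynomial NormedSpace
open scoped Matrix

namespace Stmt17Aux

open scoped Nat

attribute [local instance] Matrix.linftyOpSemiNormedRing Matrix.linftyOpNormedRing
  Matrix.linftyOpNormedAlgebra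

variable {n : ℕ}

/-- `M ↦ M *ᵥ v` as a linear map. -/
noncomputable def mulVecLM (v : Fin n → ℂ) : Matrix (Fin n) (Fin n) ℂ →ₗ[ℂ] (Fin n → ℂ) where
  toFun M := M.mulVec v
  map_add' a b := Matrix.add_mulVec a b v
  map_smul' c a := Matrix.smul_mulVec c a v

@[simp] lemma mulVecLM_apply (v : Fin n → ℂ) (M : Matrix (Fin n) (Fin n) ℂ) :
    mulVecLM v M = M.mulVec v := rfl

lemma pow_mulVec_zero_mono {N : Matrix (Fin n) (Fin n) ℂ} {v : Fin n → ℂ} {k K : ℕ}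
    (h : N ^ k *ᵥ v = 0) (hkK : k ≤ K) : N ^ K *ᵥ v = 0 := by
  obtain ⟨d, rfl⟩ := Nat.exists_eq_add_of_le hkK
  rw [add_comm, pow_add, ← Matrix.mulVec_mulVec, h, Matrix.mulVec_zero]

lemma exp_mulVec {N : Matrix (Fin n) (Fin n) ℂ} {v : Fin n → ℂ} {m : ℕ}
    (hm : N ^ m *ᵥ v = 0) :
    (exp N) *ᵥ v = ∑ k ∈ Finset.range m, ((k ! : ℂ)⁻¹) • (N ^ k *ᵥ v) := by
  have hφ : Continuous (mulVecLM (n := n) v) :=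
    (mulVecLM v).continuous_of_finiteDimensional
  have hs := expSeries_summable' (𝕂 := ℂ) N
  have h1 : (mulVecLM v) (exp N) = ∑' k : ℕ, (mulVecLM v) (((k ! : ℂ)⁻¹) • N ^ k) := by
    simp only [exp_eq_tsum ℂ]
    exact ((hs.hasSum.map (mulVecLM v) hφ).tsum_eq).symm
  have h2 : ∀ k ∉ Finset.range m, (mulVecLM v) (((k ! : ℂ)⁻¹) • N ^ k) = 0 := by
    intro k hk
    rw [Finset.mem_range, not_lt] at hk
    simp [pow_mulVec_zero_mono hm hk]
  calc (exp N) *ᵥ v = (mulVecLM v) (exp N) := rfl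
    _ = ∑' k : ℕ, (mulVecLM v) (((k ! : ℂ)⁻¹) • N ^ k) := h1
    _ = ∑ k ∈ Finset.range m, (mulVecLM v) (((k ! : ℂ)⁻¹) • N ^ k) := tsum_eq_sum h2
    _ = ∑ k ∈ Finset.range m, ((k ! : ℂ)⁻¹) • (N ^ k *ᵥ v) := by
        simp [Matrix.smul_mulVec]


noncomputable def Epoly (m : ℕ) : Polynomial ℂ :=
  ∑ k ∈ Finset.range m, Polynomial.C ((k ! : ℂ)⁻¹) * Polynomial.X ^ k

lemma aeval_Epoly (N : Matrix (Fin n) (Fin n) ℂ) (m : ℕ) :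
    (Polynomial.aeval N) (Epoly m) = ∑ k ∈ Finset.range m, ((k ! : ℂ)⁻¹) • N ^ k := by
  simp [Epoly, Algebra.smul_def]

noncomputable def Lpoly (M : ℕ) : Polynomial ℂ :=
  ∑ j ∈ Finset.range M, Polynomial.C ((-1 : ℂ) ^ j * ((j : ℂ) + 1)⁻¹) * Polynomial.X ^ (j + 1)

lemma derivative_Epoly (m : ℕ) : derivative (Epoly (m + 1)) = Epoly m := by
  unfold Epoly
  rw [Finset.sum_range_succ', map_add, map_sum]
  have h0 : derivative (Polynomial.C ((0! : ℂ)⁻¹) * Polynomial.X ^ 0) = 0 := by simp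
  rw [h0, add_zero]
  refine Finset.sum_congr rfl fun k _ => ?_
  rw [derivative_C_mul_X_pow, Nat.add_sub_cancel]
  have h : ((k : ℂ) + 1) ≠ 0 := Nat.cast_add_one_ne_zero k
  congr 1
  have hk : (k ! : ℂ) ≠ 0 := Nat.cast_ne_zero.mpr (Nat.factorial_ne_zero k)
  rw [Nat.factorial_succ]
  push_cast
  rw [mul_inv]
  field_simp

lemma derivative_Lpoly (M : ℕ) :
    derivative (Lpoly M) = ∑ j ∈ Finset.range M, (-X : ℂ[X]) ^ j := by
  unfold Lpoly
  rw [map_sum]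
  refine Finset.sum_congr rfl fun j _ => ?_
  rw [derivative_C_mul_X_pow, Nat.add_sub_cancel]
  have h : ((j : ℂ) + 1) ≠ 0 := Nat.cast_add_one_ne_zero j
  have h2 : ((-1 : ℂ) ^ j * ((j : ℂ) + 1)⁻¹ * ((j + 1 : ℕ) : ℂ)) = (-1 : ℂ) ^ j := by
    push_cast; field_simp
  rw [h2]
  conv_rhs => rw [neg_pow]
  rw [map_pow]
  simp

lemma eval_zero_Lpoly (M : ℕ) : (Lpoly M).eval 0 = 0 := by
  simp [Lpoly, Polynomial.eval_finset_sum]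


lemma coeff_Epoly_zero {m : ℕ} (hm : 0 < m) : (Epoly m).coeff 0 = 1 := by
  unfold Epoly
  rw [Polynomial.finset_sum_coeff]
  rw [Finset.sum_eq_single_of_mem 0 (Finset.mem_range.mpr hm)]
  · simp
  · intro k _ hk
    simp [Polynomial.coeff_C_mul, Polynomial.coeff_X_pow, Ne.symm hk]

lemma X_dvd_Epoly_sub_one {m : ℕ} (hm : 0 < m) : (X : ℂ[X]) ∣ (Epoly m - 1) := by
  rw [Polynomial.X_dvd_iff]
  simp [coeff_Epoly_zero hm]

lemma key_dvd {m M : ℕ} (hmM : m ≤ M) :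
    (X : ℂ[X]) ^ m ∣ (Lpoly M).comp (Epoly m - 1) - X := by
  cases m with
  | zero => simpa using one_dvd _
  | succ m' =>
    set y : ℂ[X] := Epoly (m' + 1) - 1 with hy
    have hXy : (X : ℂ[X]) ∣ y := X_dvd_Epoly_sub_one (Nat.succ_pos m')
    set F : ℂ[X] := (Lpoly M).comp y - X with hF
    set Gy : ℂ[X] := ∑ j ∈ Finset.range M, (-y) ^ j with hGy
    -- derivative of the composition
    have hcomp : (derivative (Lpoly M)).comp y = Gy := by
      rw [derivative_Lpoly, Polynomial.comp, Polynomial.eval₂_finset_sum]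
      refine Finset.sum_congr rfl fun j _ => ?_
      simp [Polynomial.eval₂_pow]
    have hdy : derivative y = Epoly m' := by
      rw [hy, map_sub, derivative_one, sub_zero, derivative_Epoly]
    have hgeom : (1 + y) * Gy = 1 - (-y) ^ M := by
      have hg := geom_sum_mul (-y) M
      rw [hGy]
      linear_combination -hg
    have hEs : Epoly (m' + 1) = Epoly m' + Polynomial.C ((m' ! : ℂ)⁻¹) * X ^ m' := by
      unfold Epoly
      rw [Finset.sum_range_succ]
    have h1y : 1 + y = Epoly (m' + 1) := by rw [hy]; ring
    have hderF : derivative F = -(-y) ^ M - Polynomial.C ((m' ! : ℂ)⁻¹) * X ^ m' * Gy := by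
      rw [hF, map_sub, derivative_X, Polynomial.derivative_comp, hcomp, hdy]
      have : Epoly m' = (1 + y) - Polynomial.C ((m' ! : ℂ)⁻¹) * X ^ m' := by
        rw [h1y, hEs]; ring
      rw [this, sub_mul, hgeom]
      ring
    have hdvdF' : (X : ℂ[X]) ^ m' ∣ derivative F := by
      rw [hderF]
      refine dvd_sub (dvd_neg.mpr ?_) ?_
      · exact dvd_trans (pow_dvd_pow X (Nat.le_of_succ_le hmM))
          (pow_dvd_pow_of_dvd (dvd_neg.mpr hXy) M)
      · exact Dvd.dvd.mul_right (dvd_mul_left _ _) _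
    have hF0 : F.coeff 0 = 0 := by
      rw [Polynomial.coeff_zero_eq_eval_zero, hF, Polynomial.eval_sub, Polynomial.eval_comp]
      have : y.eval 0 = 0 := by
        rw [hy, Polynomial.eval_sub, Polynomial.eval_one, ← Polynomial.coeff_zero_eq_eval_zero,
          coeff_Epoly_zero (Nat.succ_pos m'), sub_self]
      rw [this, eval_zero_Lpoly]
      simp
    rw [Polynomial.X_pow_dvd_iff]
    intro d hd
    cases d with
    | zero => exact hF0
    | succ e =>
      have he : e < m' := Nat.lt_of_succ_lt_succ hd
      have h1 : (derivative F).coeff e = 0 := Polynomial.X_pow_dvd_iff.mp hdvdF' e he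
      rw [Polynomial.coeff_derivative] at h1
      rcases mul_eq_zero.mp h1 with h | h
      · exact h
      · exact absurd h (Nat.cast_add_one_ne_zero e)


lemma exp_smul_one (μ : ℂ) :
    exp (μ • (1 : Matrix (Fin n) (Fin n) ℂ)) = Complex.exp μ • (1 : Matrix (Fin n) (Fin n) ℂ) := by
  have hs : Summable fun k : ℕ => ((k ! : ℂ)⁻¹) * μ ^ k := by
    simpa [smul_eq_mul] using expSeries_summable' (𝕂 := ℂ) μ
  simp only [exp_eq_tsum ℂ]
  have h1 : ∀ k : ℕ, ((k ! : ℂ)⁻¹) • (μ • (1 : Matrix (Fin n) (Fin n) ℂ)) ^ k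
      = (((k ! : ℂ)⁻¹) * μ ^ k) • (1 : Matrix (Fin n) (Fin n) ℂ) := by
    intro k; rw [_root_.smul_pow, one_pow, smul_smul]
  rw [tsum_congr h1, hs.tsum_smul_const]
  congr 1
  rw [Complex.exp_eq_exp_ℂ]
  simp [exp_eq_tsum ℂ, smul_eq_mul]

lemma exp_decomp (L : Matrix (Fin n) (Fin n) ℂ) (μ : ℂ) :
    NormedSpace.exp L = Complex.exp μ • NormedSpace.exp (L - μ • 1) := by
  have hc : Commute (μ • (1 : Matrix (Fin n) (Fin n) ℂ)) (L - μ • 1) :=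
    (Commute.one_left (L - μ • 1)).smul_left μ
  calc NormedSpace.exp L = NormedSpace.exp (μ • 1 + (L - μ • 1)) := by rw [add_sub_cancel]
    _ = NormedSpace.exp (μ • (1 : Matrix (Fin n) (Fin n) ℂ)) * NormedSpace.exp (L - μ • 1) :=
        Matrix.exp_add_of_commute _ _ hc
    _ = Complex.exp μ • NormedSpace.exp (L - μ • 1) := by rw [exp_smul_one, smul_mul_assoc, one_mul]

lemma exp_mulVec_poly {N : Matrix (Fin n) (Fin n) ℂ} {v : Fin n → ℂ} {m : ℕ}
    (hm : N ^ m *ᵥ v = 0) :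
    (exp N) *ᵥ v = (Polynomial.aeval N (Epoly m)) *ᵥ v := by
  rw [exp_mulVec hm, aeval_Epoly, ← mulVecLM_apply v, map_sum]
  refine Finset.sum_congr rfl fun k _ => ?_
  simp [Matrix.smul_mulVec]

lemma pow_agree {N : Matrix (Fin n) (Fin n) ℂ} {v : Fin n → ℂ} {m : ℕ}
    (hm : N ^ m *ᵥ v = 0) (j : ℕ) :
    ((exp N - 1) ^ j) *ᵥ v = ((Polynomial.aeval N (Epoly m - 1)) ^ j) *ᵥ v ∧
      N ^ m *ᵥ (((exp N - 1) ^ j) *ᵥ v) = 0 := by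
  have hcNe : Commute (N ^ m) (exp N - 1) :=
    (((Commute.refl N).exp_right).sub_right (Commute.one_right N)).pow_left m
  induction j with
  | zero => simpa using hm
  | succ j ih =>
    obtain ⟨h1, h2⟩ := ih
    have hyw : (exp N - 1) *ᵥ ((exp N - 1) ^ j *ᵥ v)
        = (Polynomial.aeval N (Epoly m - 1)) *ᵥ ((exp N - 1) ^ j *ᵥ v) := by
      rw [map_sub, Matrix.sub_mulVec, Matrix.sub_mulVec, exp_mulVec_poly h2, _root_.map_one]
    constructor
    · rw [pow_succ', ← Matrix.mulVec_mulVec, hyw, h1, Matrix.mulVec_mulVec, ← pow_succ']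
    · rw [pow_succ', ← Matrix.mulVec_mulVec, Matrix.mulVec_mulVec, hcNe.eq,
        ← Matrix.mulVec_mulVec, h2, Matrix.mulVec_zero]

lemma aeval_agree {N : Matrix (Fin n) (Fin n) ℂ} {v : Fin n → ℂ} {m : ℕ}
    (hm : N ^ m *ᵥ v = 0) (q : Polynomial ℂ) :
    (Polynomial.aeval (exp N - 1) q) *ᵥ v
      = (Polynomial.aeval (Polynomial.aeval N (Epoly m - 1)) q) *ᵥ v := by
  rw [Polynomial.aeval_eq_sum_range (x := exp N - 1),
    Polynomial.aeval_eq_sum_range (x := Polynomial.aeval N (Epoly m - 1)),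
    ← mulVecLM_apply v, ← mulVecLM_apply v, map_sum, map_sum]
  refine Finset.sum_congr rfl fun i _ => ?_
  rw [_root_.map_smul, _root_.map_smul, mulVecLM_apply, mulVecLM_apply, (pow_agree hm i).1]

lemma log_exp_mulVec {N : Matrix (Fin n) (Fin n) ℂ} {v : Fin n → ℂ} {m M : ℕ}
    (hm : N ^ m *ᵥ v = 0) (hmM : m ≤ M) :
    N *ᵥ v = (Polynomial.aeval (exp N - 1) (Lpoly M)) *ᵥ v := by
  rw [aeval_agree hm, ← Polynomial.aeval_comp]
  obtain ⟨q, hq⟩ := key_dvd hmM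
  have hcomp : (Lpoly M).comp (Epoly m - 1) = X + q * X ^ m := by
    linear_combination hq
  rw [hcomp, map_add, _root_.map_mul, Polynomial.aeval_X, map_pow, Polynomial.aeval_X,
    Matrix.add_mulVec, ← Matrix.mulVec_mulVec, hm, Matrix.mulVec_zero, add_zero]

lemma genEig_incl_pointwise {L A' : Matrix (Fin n) (Fin n) ℂ} (hexp : exp L = A') (μ : ℂ)
    {v : Fin n → ℂ} {m : ℕ} (hm : ((L - μ • 1) ^ m) *ᵥ v = 0) :
    ((A' - Complex.exp μ • 1) ^ m) *ᵥ v = 0 := by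
  rcases Nat.eq_zero_or_pos m with rfl | hm0
  · simpa using hm
  set N := L - μ • 1 with hN
  have h1 : A' - Complex.exp μ • 1 = Complex.exp μ • (exp N - 1) := by
    rw [← hexp, exp_decomp L μ, ← hN, smul_sub]
  rw [h1, _root_.smul_pow, Matrix.smul_mulVec]
  have h2 := (pow_agree hm m).1
  obtain ⟨q, hq⟩ := X_dvd_Epoly_sub_one hm0
  have h3 : (Polynomial.aeval N (Epoly m - 1)) ^ m = Polynomial.aeval N (q ^ m) * N ^ m := by
    rw [← map_pow, hq, mul_pow, mul_comm ((X : ℂ[X]) ^ m), _root_.map_mul, map_pow, map_pow,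
      Polynomial.aeval_X]
  rw [h2, h3, ← Matrix.mulVec_mulVec, hm, Matrix.mulVec_zero, smul_zero]

lemma endo_sub_pow_apply (B : Matrix (Fin n) (Fin n) ℂ) (μ : ℂ) (k : ℕ) (v : Fin n → ℂ) :
    ((Matrix.toLinAlgEquiv' B - μ • (1 : Module.End ℂ (Fin n → ℂ))) ^ k) v
      = ((B - μ • 1) ^ k) *ᵥ v := by
  have h : Matrix.toLinAlgEquiv' B - μ • (1 : Module.End ℂ (Fin n → ℂ))
      = Matrix.toLinAlgEquiv' (B - μ • 1) := by
    rw [map_sub, _root_.map_smul, _root_.map_one]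
  rw [h, ← map_pow, Matrix.toLinAlgEquiv'_apply]

lemma mem_maxGen_iff (B : Matrix (Fin n) (Fin n) ℂ) (μ : ℂ) (v : Fin n → ℂ) :
    v ∈ Module.End.maxGenEigenspace (Matrix.toLinAlgEquiv' B) μ
      ↔ ∃ k : ℕ, ((B - μ • 1) ^ k) *ᵥ v = 0 := by
  rw [Module.End.mem_maxGenEigenspace]
  exact exists_congr fun k => by rw [endo_sub_pow_apply]

lemma maxGen_le {L A' : Matrix (Fin n) (Fin n) ℂ} (hexp : exp L = A') (μ : ℂ) :
    Module.End.maxGenEigenspace (Matrix.toLinAlgEquiv' L) μ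
      ≤ Module.End.maxGenEigenspace (Matrix.toLinAlgEquiv' A') (Complex.exp μ) := by
  intro v hv
  rw [mem_maxGen_iff] at hv ⊢
  obtain ⟨k, hk⟩ := hv
  exact ⟨k, genEig_incl_pointwise hexp μ hk⟩

lemma mem_spectrum_of_maxGen {B : Matrix (Fin n) (Fin n) ℂ} {μ : ℂ}
    (h : Module.End.maxGenEigenspace (Matrix.toLinAlgEquiv' B) μ ≠ ⊥) :
    μ ∈ spectrum ℂ B := by
  rw [← AlgEquiv.spectrum_eq (Matrix.toLinAlgEquiv' (n := Fin n) (R := ℂ)) B,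
    ← Module.End.hasEigenvalue_iff_mem_spectrum]
  exact Module.End.HasUnifEigenvalue.lt zero_lt_one h

lemma keyD {A L : Matrix (Fin n) (Fin n) ℂ} (hexp : exp L = A)
    (huniq : ∀ μ μ', μ ∈ spectrum ℂ L → μ' ∈ spectrum ℂ L →
      Complex.exp μ = Complex.exp μ' → μ = μ')
    {lam : ℂ} {v : Fin n → ℂ} (hv : v ≠ 0)
    (hvW : v ∈ Module.End.maxGenEigenspace (Matrix.toLinAlgEquiv' A) lam) :
    ∃ μ, μ ∈ spectrum ℂ L ∧ Complex.exp μ = lam ∧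
      v ∈ Module.End.maxGenEigenspace (Matrix.toLinAlgEquiv' L) μ := by
  set fA := Matrix.toLinAlgEquiv' A with hfA
  set fL := Matrix.toLinAlgEquiv' L with hfL
  set XX : Submodule ℂ (Fin n → ℂ) :=
    ⨆ lam' : ℂ, ⨆ _ : lam' ≠ lam, Module.End.maxGenEigenspace fA lam' with hXX
  have hXdisj : Disjoint (Module.End.maxGenEigenspace fA lam) XX :=
    (Module.End.independent_genEigenspace fA ⊤) lam
  have hle : ∀ μ : ℂ, Complex.exp μ ≠ lam → Module.End.maxGenEigenspace fL μ ≤ XX := fun μ hμ =>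
    le_trans (maxGen_le hexp μ) (le_iSup_of_le (Complex.exp μ) (le_iSup_of_le hμ le_rfl))
  by_cases hex : ∃ μ₀, μ₀ ∈ spectrum ℂ L ∧ Complex.exp μ₀ = lam
  · obtain ⟨μ₀, hμ₀s, hμ₀e⟩ := hex
    refine ⟨μ₀, hμ₀s, hμ₀e, ?_⟩
    have htop : (⊤ : Submodule ℂ (Fin n → ℂ)) ≤ Module.End.maxGenEigenspace fL μ₀ ⊔ XX := by
      rw [← Module.End.iSup_maxGenEigenspace_eq_top fL]
      refine iSup_le fun μ => ?_
      by_cases hb : Module.End.maxGenEigenspace fL μ = ⊥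
      · rw [hb]; exact bot_le
      · by_cases he : Complex.exp μ = lam
        · have hμμ : μ = μ₀ := huniq μ μ₀ (mem_spectrum_of_maxGen hb) hμ₀s (he.trans hμ₀e.symm)
          rw [hμμ]; exact le_sup_left
        · exact le_sup_of_le_right (hle μ he)
    have hsub : Module.End.maxGenEigenspace fL μ₀ ≤ Module.End.maxGenEigenspace fA lam := by
      rw [← hμ₀e]; exact maxGen_le hexp μ₀
    have hmod := sup_inf_assoc_of_le (x := Module.End.maxGenEigenspace fL μ₀) XX hsub
    have hv2 : v ∈ (Module.End.maxGenEigenspace fL μ₀ ⊔ XX) ⊓ Module.End.maxGenEigenspace fA lam :=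
      Submodule.mem_inf.mpr ⟨htop Submodule.mem_top, hvW⟩
    rw [hmod] at hv2
    have hbot : XX ⊓ Module.End.maxGenEigenspace fA lam = ⊥ := by
      rw [inf_comm]; exact Disjoint.eq_bot hXdisj
    rw [hbot, sup_bot_eq] at hv2
    exact hv2
  · exfalso
    have htop : (⊤ : Submodule ℂ (Fin n → ℂ)) ≤ XX := by
      rw [← Module.End.iSup_maxGenEigenspace_eq_top fL]
      refine iSup_le fun μ => ?_
      by_cases hb : Module.End.maxGenEigenspace fL μ = ⊥
      · rw [hb]; exact bot_le
      · exact hle μ fun he => hex ⟨μ, mem_spectrum_of_maxGen hb, he⟩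
    have hvmem : v ∈ Module.End.maxGenEigenspace fA lam ⊓ XX :=
      Submodule.mem_inf.mpr ⟨hvW, htop Submodule.mem_top⟩
    rw [Disjoint.eq_bot hXdisj] at hvmem
    exact hv (by simpa using hvmem)

end Stmt17Aux

open Stmt17Aux

/-- If `log_θ A` and `log_φ A` are the logarithms of an invertible matrix `A` with respect to
two spectral cuts `0 ≤ θ < φ < 2π` (characterized as commuting logarithms of `A` whose spectra
lie in the horizontal strips determined by the branch cuts), then
`log_θ A - log_φ A = -2πi P` for an idempotent `P` commuting with `A`
(the spectral projection onto the eigenvalues with argument in `(θ, φ)`). -/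
theorem stmt17 (n : ℕ) (A Lθ Lφ : Matrix (Fin n) (Fin n) ℂ) (θ φ : ℝ)
    (h0θ : 0 ≤ θ) (hθφ : θ < φ) (hφ : φ < 2 * Real.pi)
    (hA : IsUnit A)
    (hrayθ : ∀ z ∈ spectrum ℂ A, ∀ r : ℝ, 0 ≤ r →
      z ≠ (r : ℂ) * Complex.exp ((θ : ℂ) * Complex.I))
    (hrayφ : ∀ z ∈ spectrum ℂ A, ∀ r : ℝ, 0 ≤ r →
      z ≠ (r : ℂ) * Complex.exp ((φ : ℂ) * Complex.I))
    (hexpθ : NormedSpace.exp Lθ = A) (hcommθ : Commute A Lθ)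
    (hspecθ : ∀ z ∈ spectrum ℂ Lθ, θ < z.im ∧ z.im < θ + 2 * Real.pi)
    (hexpφ : NormedSpace.exp Lφ = A) (hcommφ : Commute A Lφ)
    (hspecφ : ∀ z ∈ spectrum ℂ Lφ, φ < z.im ∧ z.im < φ + 2 * Real.pi) :
    ∃ P : Matrix (Fin n) (Fin n) ℂ, P * P = P ∧ Commute A P ∧
      Lθ - Lφ = (-(2 * (Real.pi : ℂ) * Complex.I)) • P := by
  classical
  have hπ := Real.pi_pos
  -- uniqueness of logarithms within a horizontal strip of height 2π
  have strip : ∀ (ψ : ℝ) (L : Matrix (Fin n) (Fin n) ℂ),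
      (∀ z ∈ spectrum ℂ L, ψ < z.im ∧ z.im < ψ + 2 * Real.pi) →
      ∀ μ μ', μ ∈ spectrum ℂ L → μ' ∈ spectrum ℂ L →
        Complex.exp μ = Complex.exp μ' → μ = μ' := by
    intro ψ L hspec μ μ' hμ hμ' he
    obtain ⟨h1, h2⟩ := hspec μ hμ
    obtain ⟨h3, h4⟩ := hspec μ' hμ'
    have hone : Complex.exp (μ - μ') = 1 := by
      rw [Complex.exp_sub, he, div_self (Complex.exp_ne_zero _)]
    obtain ⟨k, hk⟩ := Complex.exp_eq_one_iff.mp hone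
    have him : μ.im - μ'.im = (k : ℝ) * (2 * Real.pi) := by
      have h5 := congrArg Complex.im hk
      simpa [Complex.sub_im, Complex.mul_im, Complex.mul_re] using h5
    have hk1 : (k : ℝ) < 1 := by nlinarith
    have hk2 : (-1 : ℝ) < (k : ℝ) := by nlinarith
    have hk0 : k = 0 := by
      have a1 : k < 1 := by exact_mod_cast hk1
      have a2 : -1 < k := by exact_mod_cast hk2
      omega
    rw [hk0] at hk
    simp only [Int.cast_zero, zero_mul] at hk
    exact sub_eq_zero.mp hk
  set c2 : ℂ := 2 * (Real.pi : ℂ) * Complex.I with hc2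
  have hc2ne : c2 ≠ 0 := by
    simp only [hc2]
    refine mul_ne_zero (mul_ne_zero two_ne_zero ?_) Complex.I_ne_zero
    exact_mod_cast Real.pi_ne_zero
  set D : Matrix (Fin n) (Fin n) ℂ := Lθ - Lφ with hD
  have hzero : D * (D + c2 • 1) = 0 := by
    have hker : ∀ lam : ℂ,
        Module.End.maxGenEigenspace (Matrix.toLinAlgEquiv' A) lam ≤
          LinearMap.ker (Matrix.toLinAlgEquiv' (D * (D + c2 • 1))) := by
      intro lam v hvW
      rw [LinearMap.mem_ker, Matrix.toLinAlgEquiv'_apply]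
      by_cases hv : v = 0
      · rw [hv, Matrix.mulVec_zero]
      obtain ⟨μθ, hμθs, hμθe, hvθ⟩ := keyD hexpθ (strip θ Lθ hspecθ) hv hvW
      obtain ⟨μφ, hμφs, hμφe, hvφ⟩ := keyD hexpφ (strip φ Lφ hspecφ) hv hvW
      obtain ⟨kθ, hkθ⟩ := (mem_maxGen_iff _ _ _).mp hvθ
      obtain ⟨kφ, hkφ⟩ := (mem_maxGen_iff _ _ _).mp hvφ
      set M : ℕ := max kθ kφ with hM
      have hNθ : (Lθ - μθ • 1) ^ M *ᵥ v = 0 := pow_mulVec_zero_mono hkθ (le_max_left _ _)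
      have hNφ : (Lφ - μφ • 1) ^ M *ᵥ v = 0 := pow_mulVec_zero_mono hkφ (le_max_right _ _)
      have hexpNθ : NormedSpace.exp (Lθ - μθ • 1) = (Complex.exp μθ)⁻¹ • A := by
        rw [← hexpθ, exp_decomp Lθ μθ, smul_smul,
          inv_mul_cancel₀ (Complex.exp_ne_zero _), one_smul]
      have hexpNφ : NormedSpace.exp (Lφ - μφ • 1) = (Complex.exp μφ)⁻¹ • A := by
        rw [← hexpφ, exp_decomp Lφ μφ, smul_smul,
          inv_mul_cancel₀ (Complex.exp_ne_zero _), one_smul]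
      have hU : NormedSpace.exp (Lθ - μθ • 1) = NormedSpace.exp (Lφ - μφ • 1) := by
        rw [hexpNθ, hexpNφ, hμθe, hμφe]
      have hNeq : (Lθ - μθ • 1) *ᵥ v = (Lφ - μφ • 1) *ᵥ v := by
        rw [log_exp_mulVec hNθ (le_refl M), hU, ← log_exp_mulVec hNφ (le_refl M)]
      have hdiff : Complex.exp (μθ - μφ) = 1 := by
        rw [Complex.exp_sub, hμθe, hμφe, div_self]
        rw [← hμθe]
        exact Complex.exp_ne_zero _
      obtain ⟨k, hk⟩ := Complex.exp_eq_one_iff.mp hdiff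
      obtain ⟨hs1, hs2⟩ := hspecθ μθ hμθs
      obtain ⟨hs3, hs4⟩ := hspecφ μφ hμφs
      have him : μθ.im - μφ.im = (k : ℝ) * (2 * Real.pi) := by
        have h5 := congrArg Complex.im hk
        simpa [Complex.sub_im, Complex.mul_im, Complex.mul_re] using h5
      have hk1 : (k : ℝ) < 1 := by nlinarith
      have hk2 : (-2 : ℝ) < (k : ℝ) := by nlinarith
      have hkint : k = 0 ∨ k = -1 := by
        have a1 : k < 1 := by exact_mod_cast hk1
        have a2 : -2 < k := by exact_mod_cast hk2
        omega
      have hcc : μθ - μφ = 0 ∨ μθ - μφ = -c2 := by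
        rcases hkint with h | h <;> rw [h] at hk
        · left; simpa using hk
        · right; rw [hk, hc2]; push_cast; ring
      have hsm : ∀ (B : Matrix (Fin n) (Fin n) ℂ) (μ : ℂ),
          (B - μ • 1) *ᵥ v = B *ᵥ v - μ • v := by
        intro B μ
        rw [Matrix.sub_mulVec, Matrix.smul_mulVec, Matrix.one_mulVec]
      have hDv : D *ᵥ v = (μθ - μφ) • v := by
        have h6 := hNeq
        rw [hsm, hsm] at h6
        rw [hD, Matrix.sub_mulVec, sub_smul]
        exact sub_eq_sub_iff_sub_eq_sub.mp h6
      have hsplit : (D * (D + c2 • 1)) *ᵥ v = (((μθ - μφ) + c2) * (μθ - μφ)) • v := by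
        rw [← Matrix.mulVec_mulVec, Matrix.add_mulVec, Matrix.smul_mulVec,
          Matrix.one_mulVec, hDv, ← add_smul, Matrix.mulVec_smul, hDv, smul_smul]
      rw [hsplit]
      rcases hcc with h | h <;> rw [h]
      · simp
      · simp
    have hE : Matrix.toLinAlgEquiv' (D * (D + c2 • 1))
        = (0 : Module.End ℂ (Fin n → ℂ)) := by
      rw [← LinearMap.ker_eq_top, eq_top_iff,
        ← Module.End.iSup_maxGenEigenspace_eq_top (Matrix.toLinAlgEquiv' A)]
      exact iSup_le hker
    have := (Matrix.toLinAlgEquiv' (n := Fin n) (R := ℂ)).injective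
      (hE.trans (map_zero (Matrix.toLinAlgEquiv' (n := Fin n) (R := ℂ))).symm)
    exact this
  have hnegne : -c2 ≠ 0 := neg_ne_zero.mpr hc2ne
  refine ⟨(-c2)⁻¹ • D, ?_, ?_, ?_⟩
  · have hDD : D * D = -c2 • D := by
      have h7 : D * (D + c2 • 1) = D * D + c2 • D := by
        rw [mul_add, Matrix.mul_smul, mul_one]
      rw [h7] at hzero
      rw [neg_smul]
      exact eq_neg_of_add_eq_zero_left hzero
    rw [Matrix.smul_mul, Matrix.mul_smul, hDD, smul_smul, smul_smul]
    congr 1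
    field_simp
  · exact (hcommθ.sub_right hcommφ).smul_right _
  · rw [show (-(2 * (Real.pi : ℂ) * Complex.I)) = -c2 from rfl, smul_smul,
      mul_inv_cancel₀ hnegne, one_smul]
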